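/- Let n ≥ 4, let V be an n-dimensional real vector space with a nondegenerate symmetric bilinear form g, and let B be a generalized curvature tensor on V satisfying B = (φ/2)·Ric(B)∧Ric(B) + μ·g∧Ric(B) + (η/2)·g∧g with φ ≠ 0, Ric(B) ≠ (κ(B)/n)·g and Weyl(B) ≠ 0. With α₁ = κ(B) + φ⁻¹((n−2)μ − 1) and α₂ = φ⁻¹(μκ(B) + (n−1)η), the following hold: (a) α₂ = (1/n)·(tr_g((Ric(B))²) − α₁κ(B)); (b) (Ric(B))² − (1/n)·tr_g((Ric(B))²)·g = α₁·(Ric(B) − (κ(B)/n)·g); (c) (Ric(B))³ − (1/n)·tr_g((Ric(B))²)·Ric(B) = α₁·((Ric(B))² − (κ(B)/n)·Ric(B)). -/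

import Mathlib

namespace OVAff

variable {V : Type*} [AddCommGroup V] [Module ℝ V]

/-- Kulkarni–Nomizu product of two (0,2)-tensors. -/
noncomputable def KN (E F : V → V → ℝ) : V → V → V → V → ℝ := fun X₁ X₂ X₃ X₄ =>
  E X₁ X₄ * F X₂ X₃ + E X₂ X₃ * F X₁ X₄ - E X₁ X₃ * F X₂ X₄ - E X₂ X₄ * F X₁ X₃

/-- Kulkarni–Nomizu product of a (0,2)-tensor with a (0,4)-tensor. -/
noncomputable def KN4 (E : V → V → ℝ) (T : V → V → V → V → ℝ) :
    V → V → V → V → V → V → ℝ := fun X₁ X₂ X₃ X₄ Y₁ Y₂ =>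
  E X₁ X₄ * T X₂ X₃ Y₁ Y₂ + E X₂ X₃ * T X₁ X₄ Y₁ Y₂
    - E X₁ X₃ * T X₂ X₄ Y₁ Y₂ - E X₂ X₄ * T X₁ X₃ Y₁ Y₂

/-- (X ∧_A Y) Z = A(Y,Z) X − A(X,Z) Y. -/
noncomputable def wedgeVec (A : V → V → ℝ) (X Y Z : V) : V := A Y Z • X - A X Z • Y

/-- Tachibana operator Q(A,T) on a (0,2)-tensor T. -/
noncomputable def Q2 (A T : V → V → ℝ) : V → V → V → V → ℝ :=
  fun X₁ X₂ X Y => -(T (wedgeVec A X Y X₁) X₂ + T X₁ (wedgeVec A X Y X₂))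

/-- Tachibana operator Q(A,T) on a (0,4)-tensor T. -/
noncomputable def Q4 (A : V → V → ℝ) (T : V → V → V → V → ℝ) :
    V → V → V → V → V → V → ℝ := fun X₁ X₂ X₃ X₄ X Y =>
  -(T (wedgeVec A X Y X₁) X₂ X₃ X₄ + T X₁ (wedgeVec A X Y X₂) X₃ X₄
    + T X₁ X₂ (wedgeVec A X Y X₃) X₄ + T X₁ X₂ X₃ (wedgeVec A X Y X₄))

/-- The derivation B·T of a curvature operator family ℬ (with h(ℬ(X,Y)Z,W)=B(X,Y,Z,W))
acting on a (0,2)-tensor T. -/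
noncomputable def dot2 (ℬ : V → V → V → V) (T : V → V → ℝ) : V → V → V → V → ℝ :=
  fun X₁ X₂ X Y => -(T (ℬ X Y X₁) X₂ + T X₁ (ℬ X Y X₂))

/-- The derivation B·T acting on a (0,4)-tensor T. -/
noncomputable def dot4 (ℬ : V → V → V → V) (T : V → V → V → V → ℝ) :
    V → V → V → V → V → V → ℝ := fun X₁ X₂ X₃ X₄ X Y =>
  -(T (ℬ X Y X₁) X₂ X₃ X₄ + T X₁ (ℬ X Y X₂) X₃ X₄
    + T X₁ X₂ (ℬ X Y X₃) X₄ + T X₁ X₂ X₃ (ℬ X Y X₄))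

/-- Ricci contraction of a (0,4)-tensor with respect to an h-orthonormal basis `e`
with signs `ε`. -/
noncomputable def ricci {n : ℕ} (ε : Fin n → ℝ) (e : Fin n → V)
    (B : V → V → V → V → ℝ) : V → V → ℝ :=
  fun X Y => ∑ j, ε j * B (e j) X Y (e j)

/-- Scalar curvature of a (0,4)-tensor. -/
noncomputable def scal {n : ℕ} (ε : Fin n → ℝ) (e : Fin n → V)
    (B : V → V → V → V → ℝ) : ℝ :=
  ∑ j, ε j * ricci ε e B (e j) (e j)

/-- Weyl tensor of a (0,4)-tensor with respect to the metric h. -/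
noncomputable def weyl {n : ℕ} (h : V → V → ℝ) (ε : Fin n → ℝ) (e : Fin n → V)
    (B : V → V → V → V → ℝ) : V → V → V → V → ℝ := fun X₁ X₂ X₃ X₄ =>
  B X₁ X₂ X₃ X₄ - (1 / ((n : ℝ) - 2)) * KN h (ricci ε e B) X₁ X₂ X₃ X₄
    + (scal ε e B / (2 * ((n : ℝ) - 2) * ((n : ℝ) - 1))) * KN h h X₁ X₂ X₃ X₄


/-- Ricci polynomial identities for a Roter-type generalized curvature tensor. -/
theorem statement16
    {V : Type*} [AddCommGroup V] [Module ℝ V]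
    (n : ℕ) (hn : 4 ≤ n)
    (g : LinearMap.BilinForm ℝ V)
    (hgsymm : ∀ X Y, g X Y = g Y X)
    (hgnd : ∀ X : V, (∀ Y, g X Y = 0) → X = 0)
    (e : Module.Basis (Fin n) ℝ V) (ε : Fin n → ℝ)
    (hε : ∀ j, ε j = 1 ∨ ε j = -1)
    (he : ∀ j k, g (e j) (e k) = if j = k then ε j else 0)
    (B : V →ₗ[ℝ] V →ₗ[ℝ] V →ₗ[ℝ] V →ₗ[ℝ] ℝ)
    (Bf : V → V → V → V → ℝ) (hBf : Bf = fun X₁ X₂ X₃ X₄ => B X₁ X₂ X₃ X₄)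
    (hB1 : ∀ X₁ X₂ X₃ X₄, Bf X₁ X₂ X₃ X₄ = - Bf X₂ X₁ X₃ X₄)
    (hB2 : ∀ X₁ X₂ X₃ X₄, Bf X₁ X₂ X₃ X₄ = Bf X₃ X₄ X₁ X₂)
    (hB3 : ∀ X₁ X₂ X₃ X₄, Bf X₁ X₂ X₃ X₄ + Bf X₂ X₃ X₁ X₄ + Bf X₃ X₁ X₂ X₄ = 0)
    (Ric : V → V → ℝ) (hRic : Ric = ricci ε (⇑e) Bf)
    (κ : ℝ) (hκ : κ = scal ε (⇑e) Bf)
    (Wl : V → V → V → V → ℝ) (hWl : Wl = weyl (fun X Y => g X Y) ε (⇑e) Bf)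
    (φ μ η : ℝ) (hφ : φ ≠ 0)
    (hRoter : ∀ X₁ X₂ X₃ X₄, Bf X₁ X₂ X₃ X₄
      = (φ / 2) * KN Ric Ric X₁ X₂ X₃ X₄
        + μ * KN (fun X Y => g X Y) Ric X₁ X₂ X₃ X₄
        + (η / 2) * KN (fun X Y => g X Y) (fun X Y => g X Y) X₁ X₂ X₃ X₄)
    (hRicne : ¬ ∀ X Y, Ric X Y = (κ / (n : ℝ)) * g X Y)
    (hWlne : ¬ ∀ X₁ X₂ X₃ X₄, Wl X₁ X₂ X₃ X₄ = 0)
    (𝒟 : V →ₗ[ℝ] V) (h𝒟 : ∀ X Y, g (𝒟 X) Y = Ric X Y)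
    (α₁ α₂ : ℝ)
    (hα₁ : α₁ = κ + φ⁻¹ * (((n : ℝ) - 2) * μ - 1))
    (hα₂ : α₂ = φ⁻¹ * (μ * κ + ((n : ℝ) - 1) * η)) :
    (α₂ = (1 / (n : ℝ)) * (LinearMap.trace ℝ V (𝒟 ∘ₗ 𝒟) - α₁ * κ)) ∧
    (∀ X Y,
      Ric (𝒟 X) Y - (1 / (n : ℝ)) * LinearMap.trace ℝ V (𝒟 ∘ₗ 𝒟) * g X Y
        = α₁ * (Ric X Y - (κ / (n : ℝ)) * g X Y)) ∧
    (∀ X Y,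
      Ric (𝒟 (𝒟 X)) Y - (1 / (n : ℝ)) * LinearMap.trace ℝ V (𝒟 ∘ₗ 𝒟) * Ric X Y
        = α₁ * (Ric (𝒟 X) Y - (κ / (n : ℝ)) * Ric X Y)) := by
  have hn0 : (n : ℝ) ≠ 0 := by
    have : (4 : ℝ) ≤ (n : ℝ) := by exact_mod_cast hn
    linarith
  have hε2 : ∀ j, ε j * ε j = 1 := by
    intro j; rcases hε j with h | h <;> rw [h] <;> norm_num
  -- Ric via the endomorphism
  have Sg : ∀ X Y, Ric X Y = g (𝒟 X) Y := fun X Y => (h𝒟 X Y).symm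
  -- symmetry of Ric
  have Bsymm : ∀ A X Y : V, Bf A X Y A = Bf A Y X A := by
    intro A X Y
    have h1 : Bf A X Y A = - Bf A Y A X := by
      rw [hB2 A X Y A, hB1 Y A A X, hB2 A Y A X]
    have h2 : Bf A Y X A = - Bf A Y A X := by
      rw [hB2 A Y X A, hB1 X A A Y, hB2 A X A Y]
    rw [h1, h2]
  have RicS : ∀ X Y, Ric X Y = Ric Y X := by
    intro X Y
    rw [hRic]
    show (∑ j, ε j * Bf (e j) X Y (e j)) = ∑ j, ε j * Bf (e j) Y X (e j)
    exact Finset.sum_congr rfl fun j _ => by rw [Bsymm]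
  -- coordinates via g
  have hrepr : ∀ (X : V) (j : Fin n), e.repr X j = ε j * g X (e j) := by
    intro X j
    have h1 : g X (e j) = ∑ k, e.repr X k * g (e k) (e j) := by
      conv_lhs => rw [← e.sum_repr X]
      simp only [map_sum, LinearMap.sum_apply, map_smul, LinearMap.smul_apply, smul_eq_mul]
    have h2 : g X (e j) = e.repr X j * ε j := by
      rw [h1]; simp [he]
    rw [h2, mul_comm (e.repr X j) (ε j), ← mul_assoc, hε2, one_mul]
  have hgsum : ∀ X Y : V, g X Y = ∑ j, ε j * (g X (e j) * g Y (e j)) := by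
    intro X Y
    have h1 : g X Y = ∑ k, e.repr Y k * g X (e k) := by
      conv_lhs => rw [← e.sum_repr Y]
      simp only [map_sum, map_smul, smul_eq_mul]
    rw [h1]
    refine Finset.sum_congr rfl fun j _ => ?_
    rw [hrepr Y j]; ring
  have gsum' : ∀ X Y : V, (∑ j, ε j * (g X (e j) * g Y (e j))) = g X Y :=
    fun X Y => (hgsum X Y).symm
  have κsum : (∑ j, ε j * Ric (e j) (e j)) = κ := by
    rw [hκ, hRic]; rfl
  -- elementary sums
  have T1 : ∀ c : ℝ, (∑ j, ε j * (Ric (e j) (e j) * c)) = κ * c := by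
    intro c
    calc (∑ j, ε j * (Ric (e j) (e j) * c))
        = ∑ j, (ε j * Ric (e j) (e j)) * c := by
          exact Finset.sum_congr rfl fun j _ => by ring
      _ = (∑ j, ε j * Ric (e j) (e j)) * c := by rw [Finset.sum_mul]
      _ = κ * c := by rw [κsum]
  have T2 : ∀ c : ℝ, (∑ j, ε j * (g (e j) (e j) * c)) = (n : ℝ) * c := by
    intro c
    calc (∑ j, ε j * (g (e j) (e j) * c))
        = ∑ _j : Fin n, c := by
          refine Finset.sum_congr rfl fun j _ => ?_
          rw [he j j]; simp [← mul_assoc, hε2 j]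
      _ = (n : ℝ) * c := by
          simp [Finset.sum_const, Finset.card_univ, mul_comm]
  have T3 : ∀ X Y : V, (∑ j, ε j * (Ric (e j) Y * Ric X (e j))) = g (𝒟 X) (𝒟 Y) := by
    intro X Y
    calc (∑ j, ε j * (Ric (e j) Y * Ric X (e j)))
        = ∑ j, ε j * (g (𝒟 X) (e j) * g (𝒟 Y) (e j)) := by
          refine Finset.sum_congr rfl fun j _ => ?_
          rw [RicS (e j) Y, Sg Y (e j), Sg X (e j)]; ring
      _ = g (𝒟 X) (𝒟 Y) := gsum' _ _
  have T4 : ∀ X Y : V, (∑ j, ε j * (g (e j) Y * Ric X (e j))) = Ric X Y := by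
    intro X Y
    calc (∑ j, ε j * (g (e j) Y * Ric X (e j)))
        = ∑ j, ε j * (g (𝒟 X) (e j) * g Y (e j)) := by
          refine Finset.sum_congr rfl fun j _ => ?_
          rw [hgsymm (e j) Y, Sg X (e j)]; ring
      _ = g (𝒟 X) Y := gsum' _ _
      _ = Ric X Y := (Sg X Y).symm
  have T5 : ∀ X Y : V, (∑ j, ε j * (Ric (e j) Y * g X (e j))) = Ric X Y := by
    intro X Y
    calc (∑ j, ε j * (Ric (e j) Y * g X (e j)))
        = ∑ j, ε j * (g (𝒟 Y) (e j) * g X (e j)) := by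
          refine Finset.sum_congr rfl fun j _ => ?_
          rw [RicS (e j) Y, Sg Y (e j)]
      _ = g (𝒟 Y) X := gsum' _ _
      _ = Ric Y X := (Sg Y X).symm
      _ = Ric X Y := (RicS X Y).symm
  have T6 : ∀ X Y : V, (∑ j, ε j * (g (e j) Y * g X (e j))) = g X Y := by
    intro X Y
    calc (∑ j, ε j * (g (e j) Y * g X (e j)))
        = ∑ j, ε j * (g X (e j) * g Y (e j)) := by
          refine Finset.sum_congr rfl fun j _ => ?_
          rw [hgsymm (e j) Y]; ring
      _ = g X Y := gsum' _ _
  -- the fundamental contracted identity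
  have main : ∀ X Y : V, Ric X Y =
      φ * κ * Ric X Y - φ * g (𝒟 X) (𝒟 Y)
        + μ * (((n : ℝ) - 2) * Ric X Y + κ * g X Y)
        + ((n : ℝ) - 1) * η * g X Y := by
    intro X Y
    have h0 : Ric X Y = ∑ j, ε j * Bf (e j) X Y (e j) := by rw [hRic]; rfl
    have hsummand : ∀ j, ε j * Bf (e j) X Y (e j) =
        φ * (ε j * (Ric (e j) (e j) * Ric X Y))
        - φ * (ε j * (Ric (e j) Y * Ric X (e j)))
        + μ * (ε j * (g (e j) (e j) * Ric X Y))
        + μ * (ε j * (Ric (e j) (e j) * g X Y))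
        - μ * (ε j * (g (e j) Y * Ric X (e j)))
        - μ * (ε j * (Ric (e j) Y * g X (e j)))
        + η * (ε j * (g (e j) (e j) * g X Y))
        - η * (ε j * (g (e j) Y * g X (e j))) := by
      intro j
      rw [hRoter]
      simp only [KN]
      ring
    calc Ric X Y = ∑ j, ε j * Bf (e j) X Y (e j) := h0
      _ = ∑ j, (φ * (ε j * (Ric (e j) (e j) * Ric X Y))
            - φ * (ε j * (Ric (e j) Y * Ric X (e j)))
            + μ * (ε j * (g (e j) (e j) * Ric X Y))
            + μ * (ε j * (Ric (e j) (e j) * g X Y))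
            - μ * (ε j * (g (e j) Y * Ric X (e j)))
            - μ * (ε j * (Ric (e j) Y * g X (e j)))
            + η * (ε j * (g (e j) (e j) * g X Y))
            - η * (ε j * (g (e j) Y * g X (e j)))) :=
          Finset.sum_congr rfl fun j _ => hsummand j
      _ = φ * κ * Ric X Y - φ * g (𝒟 X) (𝒟 Y)
            + μ * (((n : ℝ) - 2) * Ric X Y + κ * g X Y)
            + ((n : ℝ) - 1) * η * g X Y := by
          simp only [Finset.sum_sub_distrib, Finset.sum_add_distrib, ← Finset.mul_sum]
          rw [T1, T2, T1, T2, T3, T4, T5, T6]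
          ring
  have hφ1 : φ * φ⁻¹ = 1 := mul_inv_cancel₀ hφ
  have key : ∀ X Y : V, g (𝒟 X) (𝒟 Y) = α₁ * Ric X Y + α₂ * g X Y := by
    intro X Y
    have key' : φ * g (𝒟 X) (𝒟 Y) =
        (φ * κ + ((n : ℝ) - 2) * μ - 1) * Ric X Y
          + (μ * κ + ((n : ℝ) - 1) * η) * g X Y := by
      linear_combination main X Y
    rw [hα₁, hα₂]
    linear_combination φ⁻¹ * key' + (κ * Ric X Y - g (𝒟 X) (𝒟 Y)) * hφ1
  have RicD2 : ∀ X Y : V, Ric (𝒟 X) Y = g (𝒟 X) (𝒟 Y) := by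
    intro X Y
    rw [RicS (𝒟 X) Y, Sg Y (𝒟 X)]
    exact hgsymm _ _
  -- trace computation
  have htr : ∀ L : V →ₗ[ℝ] V,
      LinearMap.trace ℝ V L = ∑ j, ε j * g (L (e j)) (e j) := by
    intro L
    rw [LinearMap.trace_eq_matrix_trace ℝ e L, Matrix.trace]
    exact Finset.sum_congr rfl fun j _ => by
      rw [Matrix.diag_apply, LinearMap.toMatrix_apply, hrepr]
  have htr2 : LinearMap.trace ℝ V (𝒟 ∘ₗ 𝒟) = α₁ * κ + (n : ℝ) * α₂ := by
    rw [htr]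
    calc (∑ j, ε j * g ((𝒟 ∘ₗ 𝒟) (e j)) (e j))
        = ∑ j, (α₁ * (ε j * Ric (e j) (e j)) + α₂) := by
          refine Finset.sum_congr rfl fun j _ => ?_
          have h1 : g ((𝒟 ∘ₗ 𝒟) (e j)) (e j) = g (𝒟 (e j)) (𝒟 (e j)) := by
            rw [LinearMap.comp_apply, ← Sg (𝒟 (e j)) (e j), RicD2]
          rw [h1, key, he j j, if_pos rfl]
          linear_combination α₂ * hε2 j
      _ = α₁ * κ + (n : ℝ) * α₂ := by
          rw [Finset.sum_add_distrib, ← Finset.mul_sum, κsum]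
          simp [Finset.sum_const, Finset.card_univ, mul_comm]
  refine ⟨?_, ?_, ?_⟩
  · rw [htr2]; field_simp; ring
  · intro X Y
    rw [RicD2, key, htr2]
    field_simp
    ring
  · intro X Y
    have h1 : Ric (𝒟 (𝒟 X)) Y = α₁ * Ric (𝒟 X) Y + α₂ * Ric X Y := by
      rw [RicD2 (𝒟 X) Y, key (𝒟 X) Y, ← Sg X Y]
    rw [h1, RicD2, key, htr2]
    field_simp
    ring

end OVAff
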